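/- In a converse setting for stability, let f : E → FE be a T-complete coalgebra with solution flow ∫f, and let V : E → R be a morphism that is flow-decrescent: V ∘ ∫f ≤ V ∘ π_E (in the posetal structure on hom-sets into R). Then, assuming axiom D9 (F preserves the order on maps into R), V is system-decrescent: FV ∘ f ≤ 0_R ∘ V as maps E → FR. -/

import Mathlib

open CategoryTheory CategoryTheory.Limits

universe v u

/-- The data of a monoidal setting for dynamic stability, without the monoid
structure on the time object: an endofunctor `F` with a laxator `ψ` (axiom D5),
stationary systems `0` (axiom D6), a time object `T` with a distinguished point
`e = 0_⊕` and a unit-clock coalgebra `1_T : T ⟶ F T`. -/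
structure PreSetting (C : Type u) [Category.{v} C] [HasFiniteProducts C] where
  /-- the endofunctor -/
  F : C ⥤ C
  /-- the laxator (axiom D5) -/
  ψ : ∀ A B : C, F.obj A ⨯ F.obj B ⟶ F.obj (A ⨯ B)
  ψ_nat : ∀ {A A' B B' : C} (u : A ⟶ A') (w : B ⟶ B'),
    prod.map (F.map u) (F.map w) ≫ ψ A' B' = ψ A B ≫ F.map (prod.map u w)
  ψ_assoc : ∀ A B D : C,
    prod.map (ψ A B) (𝟙 (F.obj D)) ≫ ψ (A ⨯ B) D ≫
        F.map (prod.associator A B D).hom =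
      (prod.associator (F.obj A) (F.obj B) (F.obj D)).hom ≫
        prod.map (𝟙 (F.obj A)) (ψ B D) ≫ ψ A (B ⨯ D)
  /-- stationary systems (axiom D6) -/
  z : ∀ A : C, A ⟶ F.obj A
  z_nat : ∀ {A B : C} (u : A ⟶ B), z A ≫ F.map u = u ≫ z B
  z_mul : ∀ A B : C, prod.map (z A) (z B) ≫ ψ A B = z (A ⨯ B)
  /-- the time object -/
  T : C
  /-- the point `0_⊕` of the time object -/
  e : ⊤_ C ⟶ T
  /-- the unit clock coalgebra -/
  oneT : T ⟶ F.obj T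

namespace PreSetting

variable {C : Type u} [Category.{v} C] [HasFiniteProducts C] (S : PreSetting C)

/-- The coalgebra `L_X := ψ_{T,X} ∘ (1_T × 0_X) : T ⨯ X ⟶ F (T ⨯ X)`. -/
noncomputable def L (X : C) : S.T ⨯ X ⟶ S.F.obj (S.T ⨯ X) :=
  prod.map S.oneT (S.z X) ≫ S.ψ S.T X

/-- The initial-condition inclusion `0_⊕ × id_X : X ⟶ T ⨯ X`. -/
noncomputable def ins (X : C) : X ⟶ S.T ⨯ X :=
  prod.lift (terminal.from X ≫ S.e) (𝟙 X)

/-- `p` is a morphism of `F`-coalgebras from `(A, f)` to `(B, g)`. -/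
def IsCoalgHom {A B : C} (f : A ⟶ S.F.obj A) (g : B ⟶ S.F.obj B)
    (p : A ⟶ B) : Prop :=
  f ≫ S.F.map p = p ≫ g

/-- The derivative of a flow `φ : T ⨯ E ⟶ E`:
`Dφ := Fφ ∘ L_E ∘ (0_⊕ × id_E)`. -/
noncomputable def deriv {E : C} (φ : S.T ⨯ E ⟶ E) : E ⟶ S.F.obj E :=
  S.ins E ≫ S.L E ≫ S.F.map φ

/-- `T`-completeness of a coalgebra `(A, f)`: every `g : B ⟶ A` extends to a
unique coalgebra morphism `γ : L_B ⟶ f` with initial condition `g`. -/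
def TComplete {A : C} (f : A ⟶ S.F.obj A) : Prop :=
  ∀ {B : C} (g : B ⟶ A), ∃! γ : S.T ⨯ B ⟶ A,
    S.IsCoalgHom (S.L B) f γ ∧ S.ins B ≫ γ = g

end PreSetting

/-- A monoidal setting for dynamic stability: a `PreSetting` together with a
monoid structure `(T, ⊕, 0_⊕)` on the time object. -/
structure DynSetting (C : Type u) [Category.{v} C] [HasFiniteProducts C]
    extends PreSetting C where
  /-- the monoid operation `⊕` on the time object -/
  mul : T ⨯ T ⟶ T
  mul_one : prod.lift (𝟙 T) (terminal.from T ≫ e) ≫ mul = 𝟙 T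
  one_mul : prod.lift (terminal.from T ≫ e) (𝟙 T) ≫ mul = 𝟙 T
  mul_assoc : (prod.associator T T T).inv ≫ prod.map mul (𝟙 T) ≫ mul =
    prod.map (𝟙 T) mul ≫ mul

namespace DynSetting

variable {C : Type u} [Category.{v} C] [HasFiniteProducts C] (S : DynSetting C)

/-- `φ : T ⨯ E ⟶ E` is a `T`-flow (monoid action). -/
def IsFlow {E : C} (φ : S.T ⨯ E ⟶ E) : Prop :=
  S.ins E ≫ φ = 𝟙 E ∧
    prod.map (𝟙 S.T) φ ≫ φ =
      (prod.associator S.T S.T E).inv ≫ prod.map S.mul (𝟙 E) ≫ φ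

/-- Compatibility of the unit clock with the monoid structure:
`F(⊕) ∘ L_T = 1_T ∘ ⊕`. -/
def ClockCompat : Prop :=
  S.L S.T ≫ S.F.map S.mul = S.mul ≫ S.oneT

end DynSetting

/-- A converse setting for stability: a monoidal setting for dynamic stability
in which the stationary system `0₁ : 1 ⟶ F 1` is neutral for the laxator
(axiom D7, making `F` lax monoidal and `0` a monoidal natural transformation)
and `0₁` is `T`-complete (axiom D8). -/
structure ConvSetting (C : Type u) [Category.{v} C] [HasFiniteProducts C]
    extends DynSetting C where
  d7_left : ∀ X : C,
    prod.map (z (⊤_ C)) (𝟙 (F.obj X)) ≫ ψ (⊤_ C) X ≫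
        F.map (prod.leftUnitor X).hom = (prod.leftUnitor (F.obj X)).hom
  d7_right : ∀ X : C,
    prod.map (𝟙 (F.obj X)) (z (⊤_ C)) ≫ ψ X (⊤_ C) ≫
        F.map (prod.rightUnitor X).hom = (prod.rightUnitor (F.obj X)).hom
  d8 : toPreSetting.TComplete (z (⊤_ C))

namespace ConvSetting

variable {C : Type u} [Category.{v} C] [HasFiniteProducts C] (S : ConvSetting C)

/-- The unique map to the terminal object is a coalgebra morphism from the
unit clock to the stationary system on `1`. -/
lemma oneT_terminal :
    S.oneT ≫ S.F.map (terminal.from S.T) =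
      terminal.from S.T ≫ S.z (⊤_ C) := by
  obtain ⟨γ, ⟨hco, -⟩, -⟩ := S.d8 (𝟙 (⊤_ C))
  have hγ : γ = terminal.from _ := terminal.hom_ext _ _
  subst hγ
  -- hco : L ⊤ ≫ F (terminal.from (T ⨯ ⊤)) = terminal.from _ ≫ z ⊤
  have key := hco
  unfold PreSetting.IsCoalgHom PreSetting.L at key
  -- precompose with the right-unitor inverse T ⟶ T ⨯ ⊤
  have h1 : terminal.from (S.T ⨯ (⊤_ C)) =
      (prod.rightUnitor S.T).hom ≫ terminal.from S.T :=
    terminal.hom_ext _ _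
  rw [h1, S.F.map_comp] at key
  have h2 : prod.map S.oneT (S.z (⊤_ C)) ≫ S.ψ S.T (⊤_ C) ≫
      S.F.map (prod.rightUnitor S.T).hom =
      (prod.rightUnitor S.T).hom ≫ S.oneT := by
    have := S.d7_right S.T
    calc prod.map S.oneT (S.z (⊤_ C)) ≫ S.ψ S.T (⊤_ C) ≫
        S.F.map (prod.rightUnitor S.T).hom
        = prod.map S.oneT (𝟙 (⊤_ C)) ≫ prod.map (𝟙 (S.F.obj S.T)) (S.z (⊤_ C)) ≫
            S.ψ S.T (⊤_ C) ≫ S.F.map (prod.rightUnitor S.T).hom := by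
          rw [show prod.map S.oneT (S.z (⊤_ C)) =
            prod.map S.oneT (𝟙 (⊤_ C)) ≫
              prod.map (𝟙 (S.F.obj S.T)) (S.z (⊤_ C)) from by
            rw [prod.map_map]; simp]
          simp only [Category.assoc]
      _ = prod.map S.oneT (𝟙 (⊤_ C)) ≫ (prod.rightUnitor (S.F.obj S.T)).hom := by
          rw [this]
      _ = (prod.rightUnitor S.T).hom ≫ S.oneT := by
          simp
  have key2 : ((prod.rightUnitor S.T).inv ≫ (prod.map S.oneT (S.z (⊤_ C)) ≫
      S.ψ S.T (⊤_ C)) ≫ (S.F.map (prod.rightUnitor S.T).hom ≫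
      S.F.map (terminal.from S.T))) =
      (prod.rightUnitor S.T).inv ≫ (((prod.rightUnitor S.T).hom ≫
        terminal.from S.T) ≫ S.z (⊤_ C)) := by rw [key]
  calc S.oneT ≫ S.F.map (terminal.from S.T)
      = (prod.rightUnitor S.T).inv ≫
          ((prod.rightUnitor S.T).hom ≫ S.oneT) ≫
          S.F.map (terminal.from S.T) := by
          simp only [Category.assoc, Iso.inv_hom_id_assoc]
    _ = (prod.rightUnitor S.T).inv ≫ (prod.map S.oneT (S.z (⊤_ C)) ≫
          S.ψ S.T (⊤_ C)) ≫ (S.F.map (prod.rightUnitor S.T).hom ≫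
          S.F.map (terminal.from S.T)) := by
        rw [← h2]; simp
    _ = (prod.rightUnitor S.T).inv ≫ (((prod.rightUnitor S.T).hom ≫
          terminal.from S.T) ≫ S.z (⊤_ C)) := key2
    _ = terminal.from S.T ≫ S.z (⊤_ C) := by
        simp only [Category.assoc, Iso.inv_hom_id_assoc]

/-- The derivative of the projection flow is the stationary system:
`ins E ≫ L E ≫ F(π_E) = 0_E`. -/
lemma deriv_snd (E : C) :
    S.ins E ≫ S.L E ≫ S.F.map (prod.snd : S.T ⨯ E ⟶ E) = S.z E := by
  have hsnd : (prod.snd : S.T ⨯ E ⟶ E) =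
      prod.map (terminal.from S.T) (𝟙 E) ≫ (prod.leftUnitor E).hom := by simp
  have hnat : S.ψ S.T E ≫ S.F.map (prod.map (terminal.from S.T) (𝟙 E)) =
      prod.map (S.F.map (terminal.from S.T)) (S.F.map (𝟙 E)) ≫
        S.ψ (⊤_ C) E := (S.ψ_nat _ _).symm
  have hone := S.oneT_terminal
  unfold PreSetting.L PreSetting.ins
  calc prod.lift (terminal.from E ≫ S.e) (𝟙 E) ≫
      (prod.map S.oneT (S.z E) ≫ S.ψ S.T E) ≫ S.F.map (prod.snd : S.T ⨯ E ⟶ E)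
      = prod.lift (terminal.from E ≫ S.e ≫ S.oneT) (S.z E) ≫ S.ψ S.T E ≫
          S.F.map (prod.map (terminal.from S.T) (𝟙 E)) ≫
          S.F.map (prod.leftUnitor E).hom := by
        rw [hsnd, S.F.map_comp]; simp
    _ = prod.lift (terminal.from E ≫ S.e ≫ S.oneT) (S.z E) ≫
          prod.map (S.F.map (terminal.from S.T)) (S.F.map (𝟙 E)) ≫
          S.ψ (⊤_ C) E ≫ S.F.map (prod.leftUnitor E).hom := by
        rw [← reassoc_of% hnat]
    _ = prod.lift (terminal.from E ≫ S.e ≫ S.oneT ≫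
          S.F.map (terminal.from S.T)) (S.z E) ≫
          S.ψ (⊤_ C) E ≫ S.F.map (prod.leftUnitor E).hom := by
        rw [← Category.assoc (prod.lift _ _)]; simp
    _ = prod.lift (terminal.from E ≫ S.z (⊤_ C)) (S.z E) ≫
          S.ψ (⊤_ C) E ≫ S.F.map (prod.leftUnitor E).hom := by
        rw [hone]
        have h3 : terminal.from E ≫ S.e ≫ terminal.from S.T =
            terminal.from E := terminal.hom_ext _ _
        rw [show terminal.from E ≫ S.e ≫ terminal.from S.T ≫ S.z (⊤_ C) =
            (terminal.from E ≫ S.e ≫ terminal.from S.T) ≫ S.z (⊤_ C) from by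
          simp only [Category.assoc], h3]
    _ = prod.lift (terminal.from E) (S.z E) ≫ prod.map (S.z (⊤_ C)) (𝟙 _) ≫
          S.ψ (⊤_ C) E ≫ S.F.map (prod.leftUnitor E).hom := by
        rw [← Category.assoc (prod.lift _ _)]; simp
    _ = prod.lift (terminal.from E) (S.z E) ≫
          (prod.leftUnitor (S.F.obj E)).hom := by
        rw [← Category.assoc, Category.assoc (prod.lift _ _), S.d7_left E]
    _ = S.z E := by simp; exact prod.lift_snd _ _

end ConvSetting

/-- **Flow-decrescent implies system-decrescent.** In a converse setting for
stability with a posetal object `R` (hom-sets into `R` and into `F R` are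
partially ordered, with precomposition monotone), let `f : E ⟶ F E` be a
`T`-complete coalgebra with solution flow `∫f`, and `V : E ⟶ R`.  If `V` is
flow-decrescent (`V ∘ ∫f ≤ V ∘ π_E`) then, assuming axiom D9 (`F` preserves
the order on maps into `R`), `V` is system-decrescent: `F V ∘ f ≤ 0_R ∘ V`. -/
theorem flow_decrescent_implies_system_decrescent {C : Type u} [Category.{v} C]
    [HasFiniteProducts C] (S : ConvSetting C) (R : C)
    [ord : ∀ A : C, PartialOrder (A ⟶ R)]
    [ordF : ∀ A : C, PartialOrder (A ⟶ S.F.obj R)]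
    (hpre : ∀ {A B : C} (w : A ⟶ B) (g h : B ⟶ R), g ≤ h → w ≫ g ≤ w ≫ h)
    (hpreF : ∀ {A B : C} (w : A ⟶ B) (g h : B ⟶ S.F.obj R), g ≤ h →
      w ≫ g ≤ w ≫ h)
    (d9 : ∀ {A : C} (g h : A ⟶ R), g ≤ h → S.F.map g ≤ S.F.map h)
    (hclock : S.toPreSetting.TComplete S.oneT) (hcc : S.ClockCompat)
    {E : C} (f : E ⟶ S.F.obj E) (hf : S.TComplete f)
    (intf : S.T ⨯ E ⟶ E)
    (hsol : S.toPreSetting.IsCoalgHom (S.L E) f intf ∧ S.ins E ≫ intf = 𝟙 E)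
    (V : E ⟶ R)
    (hdecr : intf ≫ V ≤ (prod.snd : S.T ⨯ E ⟶ E) ≫ V) :
    f ≫ S.F.map V ≤ V ≫ S.z R := by
  obtain ⟨hco, hini⟩ := hsol
  -- f = ins ≫ L ≫ F intf
  have hfeq : f = S.ins E ≫ S.L E ≫ S.F.map intf := by
    have : S.ins E ≫ intf ≫ f = f := by rw [← Category.assoc, hini]; simp
    rw [← this, ← hco]
  have step1 : f ≫ S.F.map V =
      S.ins E ≫ S.L E ≫ S.F.map (intf ≫ V) := by
    rw [hfeq, S.F.map_comp]; simp
  have step2 : S.ins E ≫ S.L E ≫ S.F.map ((prod.snd : S.T ⨯ E ⟶ E) ≫ V) =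
      V ≫ S.z R := by
    rw [S.F.map_comp, ← Category.assoc (S.L E),
      ← Category.assoc (S.ins E) (S.L E ≫ S.F.map _)]
    rw [show S.ins E ≫ S.L E ≫ S.F.map (prod.snd : S.T ⨯ E ⟶ E) =
        S.z E from by rw [← S.deriv_snd E]]
    exact S.z_nat V
  calc f ≫ S.F.map V = S.ins E ≫ S.L E ≫ S.F.map (intf ≫ V) := step1
    _ ≤ S.ins E ≫ S.L E ≫ S.F.map ((prod.snd : S.T ⨯ E ⟶ E) ≫ V) := by
        apply hpreF; apply hpreF; exact d9 _ _ hdecr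
    _ = V ≫ S.z R := step2
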